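/- Let ψ : ℕ → ℝ be a nonnegative sequence with Σ_{k=1}^∞ k·ψ(k) < ∞, let β ∈ ℝ and n ∈ ℕ (n ≥ 1). Then |𝓔_n(C^ψ_{β,1})_C − (1/π)·ψ(n)| ≤ (2/n)·Σ_{k=n+1}^∞ k·ψ(k). -/

import Mathlib

open MeasureTheory Real Filter

noncomputable section

/-- `T` is a real trigonometric polynomial of degree at most `m`. -/
def IsTrigPoly (m : ℕ) (T : ℝ → ℝ) : Prop :=
  ∃ a b : ℕ → ℝ, ∀ t : ℝ,
    T t = a 0 + ∑ k ∈ Finset.Icc 1 m, (a k * Real.cos (k * t) + b k * Real.sin (k * t))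

/-- The best approximation `E_n(g)_{L₁}` of `g` in the `L₁`-metric on `[0, 2π]`
by trigonometric polynomials of degree at most `n - 1`. -/
def bestL1 (n : ℕ) (g : ℝ → ℝ) : ℝ :=
  sInf {I : ℝ | ∃ T : ℝ → ℝ, IsTrigPoly (n - 1) T ∧
    I = ∫ t in (0 : ℝ)..(2 * π), |g t - T t|}

/-- The partial Fourier sum `S_m(f; x)` of order `m` of `f`. -/
def fourierSumR (m : ℕ) (f : ℝ → ℝ) (x : ℝ) : ℝ :=
  (1 / (2 * π)) * (∫ t in (0 : ℝ)..(2 * π), f t) +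
    ∑ k ∈ Finset.Icc 1 m,
      ((1 / π) * (∫ t in (0 : ℝ)..(2 * π), f t * Real.cos (k * t)) * Real.cos (k * x) +
        (1 / π) * (∫ t in (0 : ℝ)..(2 * π), f t * Real.sin (k * t)) * Real.sin (k * x))

/-- The kernel `Ψ_β(t) = Σ_{k=1}^∞ ψ(k) cos(k t - βπ/2)`. -/
def PsiKer (ψ : ℕ → ℝ) (β : ℝ) (t : ℝ) : ℝ :=
  ∑' k : ℕ, ψ (k + 1) * Real.cos (((k : ℝ) + 1) * t - β * π / 2)

/-- `f` belongs to the class `C^ψ_β L₁`, with `(ψ,β)`-derivative `φ`. -/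
def InClassL1 (ψ : ℕ → ℝ) (β : ℝ) (f φ : ℝ → ℝ) : Prop :=
  Continuous f ∧ (∀ x, f (x + 2 * π) = f x) ∧
    (∀ x, φ (x + 2 * π) = φ x) ∧
    IntervalIntegrable φ MeasureTheory.volume (-π) π ∧
    (∫ t in (-π)..π, φ t) = 0 ∧
    ∃ a₀ : ℝ, ∀ x, f x = a₀ / 2 + (1 / π) * ∫ t in (-π)..π, PsiKer ψ β (x - t) * φ t

/-- The uniform deviation `‖f - S_{n-1}(f;·)‖_C`. -/
def dev (n : ℕ) (f : ℝ → ℝ) : ℝ :=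
  ⨆ x : ℝ, |f x - fourierSumR (n - 1) f x|

/-- `𝓔_n(C^ψ_{β,1})_C := sup_{f ∈ C^ψ_{β,1}} ‖f - S_{n-1}(f;·)‖_C`. -/
def EnClass (ψ : ℕ → ℝ) (β : ℝ) (n : ℕ) : ℝ :=
  sSup {v : ℝ | ∃ f φ : ℝ → ℝ, InClassL1 ψ β f φ ∧
    (∫ t in (0 : ℝ)..(2 * π), |φ t|) ≤ 1 ∧ v = dev n f}

/-- The kernel `Ψ_{β,n}(t) = Σ_{k=n}^∞ ψ(k) cos(k t - βπ/2)`. -/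
def PsiKerN (ψ : ℕ → ℝ) (β : ℝ) (n : ℕ) (t : ℝ) : ℝ :=
  ∑' k : ℕ, ψ (k + n) * Real.cos (((k + n : ℕ) : ℝ) * t - β * π / 2)


lemma integral_cos_zsmul (c : ℝ) (hc : c ≠ 0) (a b : ℝ) :
    ∫ x in a..b, Real.cos (c * x) = (Real.sin (c * b) - Real.sin (c * a)) / c := by
  rw [intervalIntegral.integral_comp_mul_left Real.cos hc, integral_cos]
  rw [smul_eq_mul]; field_simp

lemma integral_sin_zsmul (c : ℝ) (hc : c ≠ 0) (a b : ℝ) :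
    ∫ x in a..b, Real.sin (c * x) = (Real.cos (c * a) - Real.cos (c * b)) / c := by
  rw [intervalIntegral.integral_comp_mul_left Real.sin hc, integral_sin]
  rw [smul_eq_mul]; field_simp

lemma sin_two_pi_int (m : ℤ) : Real.sin ((m : ℝ) * (2 * π)) = 0 := by
  have : (m : ℝ) * (2 * π) = (2 * m : ℤ) * π := by push_cast; ring
  rw [this, Real.sin_int_mul_pi]

lemma cos_two_pi_int (m : ℤ) : Real.cos ((m : ℝ) * (2 * π)) = 1 := by
  exact Real.cos_int_mul_two_pi m

/-- master cos integral -/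
lemma master_cos (m : ℤ) (γ : ℝ) :
    ∫ x in (0:ℝ)..(2 * π), Real.cos ((m : ℝ) * x - γ) =
      if m = 0 then 2 * π * Real.cos γ else 0 := by
  rcases eq_or_ne m 0 with h | h
  · simp [h, Real.cos_neg, mul_comm]
  · simp only [h, if_false]
    have hm : (m : ℝ) ≠ 0 := Int.cast_ne_zero.mpr h
    have : ∀ x : ℝ, Real.cos ((m : ℝ) * x - γ) =
        Real.cos γ * Real.cos ((m : ℝ) * x) + Real.sin γ * Real.sin ((m : ℝ) * x) := by
      intro x; rw [Real.cos_sub]; ring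
    simp only [this]
    rw [intervalIntegral.integral_add, intervalIntegral.integral_const_mul,
      intervalIntegral.integral_const_mul, integral_cos_zsmul _ hm, integral_sin_zsmul _ hm]
    · simp [sin_two_pi_int]
    · exact (IntervalIntegrable.const_mul ((Real.continuous_cos.comp
        (continuous_const.mul continuous_id)).intervalIntegrable _ _) _)
    · exact (IntervalIntegrable.const_mul ((Real.continuous_sin.comp
        (continuous_const.mul continuous_id)).intervalIntegrable _ _) _)

lemma master_sin (m : ℤ) (γ : ℝ) :
    ∫ x in (0:ℝ)..(2 * π), Real.sin ((m : ℝ) * x + γ) =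
      if m = 0 then 2 * π * Real.sin γ else 0 := by
  rcases eq_or_ne m 0 with h | h
  · simp [h]
  · simp only [h, if_false]
    have hm : (m : ℝ) ≠ 0 := Int.cast_ne_zero.mpr h
    have : ∀ x : ℝ, Real.sin ((m : ℝ) * x + γ) =
        Real.cos γ * Real.sin ((m : ℝ) * x) + Real.sin γ * Real.cos ((m : ℝ) * x) := by
      intro x; rw [Real.sin_add]; ring
    simp only [this]
    rw [intervalIntegral.integral_add, intervalIntegral.integral_const_mul,
      intervalIntegral.integral_const_mul, integral_cos_zsmul _ hm, integral_sin_zsmul _ hm]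
    · simp [sin_two_pi_int]
    · exact (IntervalIntegrable.const_mul ((Real.continuous_sin.comp
        (continuous_const.mul continuous_id)).intervalIntegrable _ _) _)
    · exact (IntervalIntegrable.const_mul ((Real.continuous_cos.comp
        (continuous_const.mul continuous_id)).intervalIntegrable _ _) _)
lemma int_cos_phase (p : ℕ) (hp : 1 ≤ p) (γ : ℝ) :
    ∫ x in (0:ℝ)..(2 * π), Real.cos ((p : ℝ) * x - γ) = 0 := by
  have := master_cos (p : ℤ) γ
  have hp0 : (p : ℤ) ≠ 0 := by exact_mod_cast Nat.one_le_iff_ne_zero.mp hp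
  simpa [hp0, Nat.one_le_iff_ne_zero.mp hp] using this

lemma orth_cc (p q : ℕ) (hp : 1 ≤ p) (hq : 1 ≤ q) (γ : ℝ) :
    ∫ x in (0:ℝ)..(2 * π), Real.cos ((p : ℝ) * x - γ) * Real.cos ((q : ℝ) * x) =
      if p = q then π * Real.cos γ else 0 := by
  have key : ∀ x : ℝ, Real.cos ((p : ℝ) * x - γ) * Real.cos ((q : ℝ) * x) =
      (1/2) * Real.cos ((((p + q : ℤ)) : ℝ) * x - γ) +
      (1/2) * Real.cos ((((p - q : ℤ)) : ℝ) * x - γ) := by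
    intro x
    have h1 : (((p + q : ℤ)) : ℝ) * x - γ = ((p : ℝ) * x - γ) + (q : ℝ) * x := by
      push_cast; ring
    have h2 : (((p - q : ℤ)) : ℝ) * x - γ = ((p : ℝ) * x - γ) - (q : ℝ) * x := by
      push_cast; ring
    rw [h1, h2]
    simp only [Real.cos_add, Real.cos_sub, Real.sin_add, Real.sin_sub]; ring
  simp only [key]
  rw [intervalIntegral.integral_add, intervalIntegral.integral_const_mul,
    intervalIntegral.integral_const_mul, master_cos, master_cos]
  · have hpq : (p + q : ℤ) ≠ 0 := by positivity
    have hq0 : q ≠ 0 := Nat.one_le_iff_ne_zero.mp hq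
    rcases eq_or_ne p q with h | h
    · simp [h, hpq, hq0]; ring
    · have : (p - q : ℤ) ≠ 0 := sub_ne_zero.mpr (by exact_mod_cast h)
      simp [h, hpq, this, hq0]
  · exact (IntervalIntegrable.const_mul ((Real.continuous_cos.comp
      (by continuity)).intervalIntegrable _ _) _)
  · exact (IntervalIntegrable.const_mul ((Real.continuous_cos.comp
      (by continuity)).intervalIntegrable _ _) _)

lemma orth_cs (p q : ℕ) (hp : 1 ≤ p) (hq : 1 ≤ q) (γ : ℝ) :
    ∫ x in (0:ℝ)..(2 * π), Real.cos ((p : ℝ) * x - γ) * Real.sin ((q : ℝ) * x) =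
      if p = q then π * Real.sin γ else 0 := by
  have key : ∀ x : ℝ, Real.cos ((p : ℝ) * x - γ) * Real.sin ((q : ℝ) * x) =
      (1/2) * Real.sin ((((q + p : ℤ)) : ℝ) * x + -γ) +
      (1/2) * Real.sin ((((q - p : ℤ)) : ℝ) * x + γ) := by
    intro x
    have h1 : (((q + p : ℤ)) : ℝ) * x + -γ = ((q : ℝ) * x) + ((p : ℝ) * x - γ) := by
      push_cast; ring
    have h2 : (((q - p : ℤ)) : ℝ) * x + γ = ((q : ℝ) * x) - ((p : ℝ) * x - γ) := by
      push_cast; ring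
    rw [h1, h2]
    simp only [Real.cos_add, Real.cos_sub, Real.sin_add, Real.sin_sub]; ring
  simp only [key]
  rw [intervalIntegral.integral_add, intervalIntegral.integral_const_mul,
    intervalIntegral.integral_const_mul, master_sin, master_sin]
  · have hpq : (q + p : ℤ) ≠ 0 := by positivity
    have hq0 : q ≠ 0 := Nat.one_le_iff_ne_zero.mp hq
    rcases eq_or_ne p q with h | h
    · simp [h, hpq, hq0]; ring
    · have : (q - p : ℤ) ≠ 0 := sub_ne_zero.mpr (by exact_mod_cast (Ne.symm h))
      simp [h, hpq, this, hq0]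
  · exact (IntervalIntegrable.const_mul ((Real.continuous_sin.comp
      (by continuity)).intervalIntegrable _ _) _)
  · exact (IntervalIntegrable.const_mul ((Real.continuous_sin.comp
      (by continuity)).intervalIntegrable _ _) _)

lemma tsum_integral_swap (a b : ℝ) (hab : a ≤ b) (F : ℕ → ℝ → ℝ) (h : ℝ → ℝ)
    (hh : IntegrableOn h (Set.Ioc a b)) (M : ℕ → ℝ) (hM : Summable M)
    (hFm : ∀ k, AEStronglyMeasurable (F k) (volume.restrict (Set.Ioc a b)))
    (hFb : ∀ k t, |F k t| ≤ M k * |h t|)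
    (hFs : ∀ t, Summable (fun k => F k t)) :
    ∫ t in a..b, (∑' k, F k t) = ∑' k, ∫ t in a..b, F k t := by
  have key : HasSum (fun k => ∫ t in Set.Ioc a b, F k t)
      (∫ t in Set.Ioc a b, (∑' k, F k t)) := by
    apply MeasureTheory.hasSum_integral_of_dominated_convergence
      (bound := fun k t => M k * |h t|) hFm
    · intro k
      filter_upwards with t using (by simpa [Real.norm_eq_abs] using hFb k t)
    · filter_upwards with t
      exact (hM.mul_right _)
    · have : (fun t => ∑' k, M k * |h t|) = fun t => (∑' k, M k) * |h t| := by
        funext t; exact tsum_mul_right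
      rw [this]
      exact (hh.norm.const_mul _)
    · filter_upwards with t
      exact (hFs t).hasSum
  rw [intervalIntegral.integral_of_le hab]
  have : ∀ k, ∫ t in a..b, F k t = ∫ t in Set.Ioc a b, F k t := fun k =>
    intervalIntegral.integral_of_le hab
  simp only [this]
  exact key.tsum_eq.symm
/-- `C_q(x) = ∫_{-π}^π cos(q(x-t) - βπ/2) φ(t) dt`. -/
def Cq (β : ℝ) (φ : ℝ → ℝ) (q : ℕ) (x : ℝ) : ℝ :=
  ∫ t in (-π)..π, Real.cos ((q : ℝ) * (x - t) - β * π / 2) * φ t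

def Pc (φ : ℝ → ℝ) (q : ℕ) : ℝ := ∫ t in (-π)..π, φ t * Real.cos ((q : ℝ) * t)
def Qc (φ : ℝ → ℝ) (q : ℕ) : ℝ := ∫ t in (-π)..π, φ t * Real.sin ((q : ℝ) * t)

section CqBasic

variable {β : ℝ} {φ : ℝ → ℝ}

lemma Cq_eq (hint : IntervalIntegrable φ MeasureTheory.volume (-π) π) (q : ℕ) (x : ℝ) :
    Cq β φ q x = Real.cos ((q : ℝ) * x - β * π / 2) * Pc φ q +
      Real.sin ((q : ℝ) * x - β * π / 2) * Qc φ q := by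
  have key : ∀ t : ℝ, Real.cos ((q : ℝ) * (x - t) - β * π / 2) * φ t =
      Real.cos ((q : ℝ) * x - β * π / 2) * (φ t * Real.cos ((q : ℝ) * t)) +
      Real.sin ((q : ℝ) * x - β * π / 2) * (φ t * Real.sin ((q : ℝ) * t)) := by
    intro t
    have h : (q : ℝ) * (x - t) - β * π / 2 = ((q : ℝ) * x - β * π / 2) - (q : ℝ) * t := by
      ring
    rw [h, Real.cos_sub]; ring
  unfold Cq Pc Qc
  simp only [key]
  rw [intervalIntegral.integral_add, intervalIntegral.integral_const_mul,
    intervalIntegral.integral_const_mul]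
  · exact (hint.mul_continuousOn (Continuous.continuousOn (by continuity))).const_mul _
  · exact (hint.mul_continuousOn (Continuous.continuousOn (by continuity))).const_mul _

lemma Cq_cont (hint : IntervalIntegrable φ MeasureTheory.volume (-π) π) (q : ℕ) : Continuous (fun x => Cq β φ q x) := by
  have : (fun x => Cq β φ q x) = fun x =>
      Real.cos ((q : ℝ) * x - β * π / 2) * Pc φ q +
      Real.sin ((q : ℝ) * x - β * π / 2) * Qc φ q := by
    funext x; exact Cq_eq hint q x
  rw [this]; continuity

lemma Cq_abs_le (hint : IntervalIntegrable φ MeasureTheory.volume (-π) π) (q : ℕ) (x : ℝ) : |Cq β φ q x| ≤ ∫ t in (-π)..π, |φ t| := by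
  have hab : -π ≤ π := by linarith [Real.pi_pos]
  have hcont : Continuous fun t : ℝ => Real.cos ((q : ℝ) * (x - t) - β * π / 2) :=
    Real.continuous_cos.comp (by fun_prop)
  have h1 : IntervalIntegrable (fun t => Real.cos ((q : ℝ) * (x - t) - β * π / 2) * φ t)
      MeasureTheory.volume (-π) π := hint.continuousOn_mul hcont.continuousOn
  refine (intervalIntegral.abs_integral_le_integral_abs hab).trans ?_
  refine intervalIntegral.integral_mono_on hab h1.abs hint.abs (fun t _ => ?_)
  rw [abs_mul]
  exact mul_le_of_le_one_left (abs_nonneg _) (Real.abs_cos_le_one _)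

end CqBasic
section Rep

variable {ψ : ℕ → ℝ} {β : ℝ} {φ f : ℝ → ℝ}

lemma psi_shift_summable (hψ : ∀ k, 0 ≤ ψ k)
    (hsum : Summable (fun k : ℕ => (k : ℝ) * ψ k)) :
    Summable (fun k => ψ (k + 1)) := by
  have h1 : Summable (fun k : ℕ => ((k + 1 : ℕ) : ℝ) * ψ (k + 1)) :=
    (summable_nat_add_iff 1).2 hsum
  refine Summable.of_nonneg_of_le (fun k => hψ _) (fun k => ?_) h1
  have h2 : (1 : ℝ) ≤ ((k + 1 : ℕ) : ℝ) := by exact_mod_cast Nat.one_le_iff_ne_zero.2 (by omega)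
  exact le_mul_of_one_le_left (hψ _) h2

lemma kernel_rep (hψ0 : ∀ k, 0 ≤ ψ k) (hψ' : Summable fun k => ψ (k + 1))
    (hint : IntervalIntegrable φ MeasureTheory.volume (-π) π) (x : ℝ) :
    (∫ t in (-π)..π, PsiKer ψ β (x - t) * φ t) = ∑' k, ψ (k + 1) * Cq β φ (k + 1) x := by
  have hπ : (0 : ℝ) < π := Real.pi_pos
  have hab : -π ≤ π := by linarith
  have hφio : IntegrableOn φ (Set.Ioc (-π) π) :=
    (intervalIntegrable_iff_integrableOn_Ioc_of_le hab).1 hint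
  have hφm : AEStronglyMeasurable φ (volume.restrict (Set.Ioc (-π) π)) :=
    hφio.aestronglyMeasurable
  set F : ℕ → ℝ → ℝ :=
    fun k t => ψ (k + 1) * (Real.cos (((k : ℝ) + 1) * (x - t) - β * π / 2) * φ t) with hF
  have hbd : ∀ k t, |F k t| ≤ ψ (k + 1) * |φ t| := by
    intro k t
    rw [hF]
    simp only
    rw [abs_mul, abs_mul, abs_of_nonneg (hψ0 _)]
    refine mul_le_mul_of_nonneg_left ?_ (hψ0 _)
    exact mul_le_of_le_one_left (abs_nonneg _) (Real.abs_cos_le_one _)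
  have hpt : ∀ t, PsiKer ψ β (x - t) * φ t = ∑' k, F k t := by
    intro t
    unfold PsiKer
    rw [← tsum_mul_right]
    congr 1; funext k; rw [hF]; ring
  simp only [hpt]
  rw [tsum_integral_swap (-π) π hab F φ hφio (fun k => ψ (k + 1)) hψ'
    (fun k => ((Real.continuous_cos.comp (by fun_prop)).aestronglyMeasurable.mul hφm).const_mul _)
    hbd
    (fun t => Summable.of_norm_bounded (hψ'.mul_right |φ t|)
      (fun k => by rw [Real.norm_eq_abs]; exact hbd k t))]
  congr 1; funext k
  rw [hF]
  simp only
  rw [intervalIntegral.integral_const_mul]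
  congr 1
  unfold Cq
  congr 1; funext t; push_cast; ring_nf

lemma summable_psiCq (hψ0 : ∀ k, 0 ≤ ψ k) (hψ' : Summable fun k => ψ (k + 1))
    (hint : IntervalIntegrable φ MeasureTheory.volume (-π) π) (x : ℝ) :
    Summable (fun k => ψ (k + 1) * Cq β φ (k + 1) x) := by
  refine Summable.of_norm_bounded (hψ'.mul_right (∫ t in (-π)..π, |φ t|)) (fun k => ?_)
  rw [Real.norm_eq_abs, abs_mul, abs_of_nonneg (hψ0 _)]
  exact mul_le_mul_of_nonneg_left (Cq_abs_le hint _ x) (hψ0 _)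

end Rep
section Coef

variable {ψ : ℕ → ℝ} {β : ℝ} {φ f : ℝ → ℝ}

lemma sinphase (q : ℕ) (γ : ℝ) :
    ∀ x : ℝ, Real.sin ((q : ℝ) * x - γ) = Real.cos ((q : ℝ) * x - (γ + π / 2)) := by
  intro x
  rw [show (q : ℝ) * x - (γ + π / 2) = ((q : ℝ) * x - γ) - π / 2 by ring,
    Real.cos_sub_pi_div_two]

lemma int_Cq_one (hint : IntervalIntegrable φ MeasureTheory.volume (-π) π)
    (q : ℕ) (hq : 1 ≤ q) :
    ∫ x in (0:ℝ)..(2 * π), Cq β φ q x = 0 := by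
  have key : ∀ x, Cq β φ q x =
      Pc φ q * Real.cos ((q : ℝ) * x - β * π / 2) +
      Qc φ q * Real.cos ((q : ℝ) * x - (β * π / 2 + π / 2)) := by
    intro x; rw [Cq_eq hint, ← sinphase]; ring
  simp only [key]
  rw [intervalIntegral.integral_add, intervalIntegral.integral_const_mul,
    intervalIntegral.integral_const_mul, int_cos_phase q hq, int_cos_phase q hq]
  · ring
  · exact ((Real.continuous_cos.comp (by fun_prop)).intervalIntegrable _ _).const_mul _
  · exact ((Real.continuous_cos.comp (by fun_prop)).intervalIntegrable _ _).const_mul _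

lemma int_Cq_cos (hint : IntervalIntegrable φ MeasureTheory.volume (-π) π)
    (q j : ℕ) (hq : 1 ≤ q) (hj : 1 ≤ j) :
    ∫ x in (0:ℝ)..(2 * π), Cq β φ q x * Real.cos ((j : ℝ) * x) =
      if q = j then π * (Pc φ q * Real.cos (β * π / 2) - Qc φ q * Real.sin (β * π / 2))
      else 0 := by
  have key : ∀ x, Cq β φ q x * Real.cos ((j : ℝ) * x) =
      Pc φ q * (Real.cos ((q : ℝ) * x - β * π / 2) * Real.cos ((j : ℝ) * x)) +
      Qc φ q * (Real.cos ((q : ℝ) * x - (β * π / 2 + π / 2)) * Real.cos ((j : ℝ) * x)) := by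
    intro x; rw [Cq_eq hint, ← sinphase]; ring
  simp only [key]
  rw [intervalIntegral.integral_add, intervalIntegral.integral_const_mul,
    intervalIntegral.integral_const_mul, orth_cc q j hq hj, orth_cc q j hq hj,
    Real.cos_add_pi_div_two]
  · rcases eq_or_ne q j with h | h
    · simp [h]; ring
    · simp [h]
  · exact (((Real.continuous_cos.comp (by fun_prop)).mul
      (Real.continuous_cos.comp (by fun_prop))).intervalIntegrable _ _).const_mul _
  · exact (((Real.continuous_cos.comp (by fun_prop)).mul
      (Real.continuous_cos.comp (by fun_prop))).intervalIntegrable _ _).const_mul _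

lemma int_Cq_sin (hint : IntervalIntegrable φ MeasureTheory.volume (-π) π)
    (q j : ℕ) (hq : 1 ≤ q) (hj : 1 ≤ j) :
    ∫ x in (0:ℝ)..(2 * π), Cq β φ q x * Real.sin ((j : ℝ) * x) =
      if q = j then π * (Pc φ q * Real.sin (β * π / 2) + Qc φ q * Real.cos (β * π / 2))
      else 0 := by
  have key : ∀ x, Cq β φ q x * Real.sin ((j : ℝ) * x) =
      Pc φ q * (Real.cos ((q : ℝ) * x - β * π / 2) * Real.sin ((j : ℝ) * x)) +
      Qc φ q * (Real.cos ((q : ℝ) * x - (β * π / 2 + π / 2)) * Real.sin ((j : ℝ) * x)) := by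
    intro x; rw [Cq_eq hint, ← sinphase]; ring
  simp only [key]
  rw [intervalIntegral.integral_add, intervalIntegral.integral_const_mul,
    intervalIntegral.integral_const_mul, orth_cs q j hq hj, orth_cs q j hq hj,
    Real.sin_add_pi_div_two]
  · rcases eq_or_ne q j with h | h
    · simp [h]; ring
    · simp [h]
  · exact (((Real.continuous_cos.comp (by fun_prop)).mul
      (Real.continuous_sin.comp (by fun_prop))).intervalIntegrable _ _).const_mul _
  · exact (((Real.continuous_cos.comp (by fun_prop)).mul
      (Real.continuous_sin.comp (by fun_prop))).intervalIntegrable _ _).const_mul _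

end Coef
section Main

variable {ψ : ℕ → ℝ} {β : ℝ} {φ f : ℝ → ℝ}

lemma f_sub_fourier (hψ0 : ∀ k, 0 ≤ ψ k) (hψ' : Summable fun k => ψ (k + 1))
    (hcl : InClassL1 ψ β f φ) (n : ℕ) (hn : 1 ≤ n) (x : ℝ) :
    f x - fourierSumR (n - 1) f x = (1 / π) * ∑' k, ψ (k + n) * Cq β φ (k + n) x := by
  obtain ⟨hfc, hfp, hφp, hint, hzero, a₀, hfx⟩ := hcl
  have hπ : (0 : ℝ) < π := Real.pi_pos
  have hab : -π ≤ π := by linarith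
  have h2π : (0 : ℝ) ≤ 2 * π := by linarith
  set Mφ := ∫ t in (-π)..π, |φ t| with hMφ
  have hMnn : 0 ≤ Mφ := intervalIntegral.integral_nonneg hab (fun t _ => abs_nonneg _)
  have hrep : ∀ y, f y = a₀ / 2 + (1 / π) * ∑' k, ψ (k + 1) * Cq β φ (k + 1) y :=
    fun y => by rw [hfx y, kernel_rep hψ0 hψ' hint y]
  have hsummx : ∀ y, Summable (fun k => ψ (k + 1) * Cq β φ (k + 1) y) :=
    summable_psiCq hψ0 hψ' hint
  have hgf : (fun y => ∑' k, ψ (k + 1) * Cq β φ (k + 1) y) =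
      fun y => π * (f y - a₀ / 2) := by
    funext y
    rw [hrep y, add_sub_cancel_left, ← mul_assoc, mul_one_div, div_self (ne_of_gt Real.pi_pos),
      one_mul]
  have hgc : Continuous (fun y => ∑' k, ψ (k + 1) * Cq β φ (k + 1) y) := by
    rw [hgf]; exact continuous_const.mul (hfc.sub continuous_const)
  -- the swap lemma specialised to weights bounded by 1
  have gswap : ∀ w : ℝ → ℝ, Continuous w → (∀ y, |w y| ≤ 1) →
      ∫ y in (0:ℝ)..(2 * π), (∑' k, ψ (k + 1) * Cq β φ (k + 1) y) * w y =
        ∑' k, ψ (k + 1) * ∫ y in (0:ℝ)..(2 * π), Cq β φ (k + 1) y * w y := by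
    intro w hw hwb
    have hpt : ∀ y, (∑' k, ψ (k + 1) * Cq β φ (k + 1) y) * w y =
        ∑' k, ψ (k + 1) * (Cq β φ (k + 1) y * w y) := by
      intro y
      rw [← tsum_mul_right]
      exact tsum_congr fun k => mul_assoc _ _ _
    simp only [hpt]
    have hb : ∀ (k : ℕ) (y : ℝ), |ψ (k + 1) * (Cq β φ (k + 1) y * w y)| ≤
        ψ (k + 1) * Mφ := by
      intro k y
      rw [abs_mul, abs_mul, abs_of_nonneg (hψ0 _)]
      refine mul_le_mul_of_nonneg_left ?_ (hψ0 _)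
      calc |Cq β φ (k + 1) y| * |w y| ≤ Mφ * 1 :=
            mul_le_mul (Cq_abs_le hint _ y) (hwb y) (abs_nonneg _) hMnn
        _ = Mφ := mul_one _
    rw [tsum_integral_swap 0 (2 * π) h2π (fun k y => ψ (k + 1) * (Cq β φ (k + 1) y * w y))
      (fun _ => (1:ℝ))
      ((MeasureTheory.integrableOn_const_iff (by simp)).2 (Or.inr measure_Ioc_lt_top))
      (fun k => ψ (k + 1) * Mφ) (hψ'.mul_right _)
      (fun k => (continuous_const.mul ((Cq_cont hint _).mul hw)).aestronglyMeasurable)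
      (fun k t => by simpa using hb k t)
      (fun y => Summable.of_norm_bounded ((hψ'.mul_right Mφ))
        (fun k => by rw [Real.norm_eq_abs]; exact hb k y))]
    exact tsum_congr fun k => intervalIntegral.integral_const_mul _ _
  -- integral of f
  have intf : ∫ y in (0:ℝ)..(2 * π), f y = π * a₀ := by
    have : ∀ y, f y = a₀ / 2 + (1 / π) *
        ((∑' k, ψ (k + 1) * Cq β φ (k + 1) y) * (fun _ : ℝ => (1:ℝ)) y) := by
      intro y; simp only [mul_one]; exact hrep y
    rw [intervalIntegral.integral_congr (g := fun y => a₀ / 2 + (1 / π) *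
        ((∑' k, ψ (k + 1) * Cq β φ (k + 1) y) * 1)) (fun y _ => this y)]
    rw [intervalIntegral.integral_add (f := fun _ => a₀ / 2)
      (g := fun y => 1 / π * ((∑' k, ψ (k + 1) * Cq β φ (k + 1) y) * 1)) intervalIntegrable_const
      ((continuous_const.mul (hgc.mul continuous_const)).intervalIntegrable _ _)]
    rw [intervalIntegral.integral_const_mul,
      gswap (fun _ => (1:ℝ)) continuous_const (fun y => by norm_num)]
    have : ∀ k : ℕ, ψ (k + 1) * ∫ y in (0:ℝ)..(2 * π), Cq β φ (k + 1) y * 1 = 0 := by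
      intro k
      rw [show (fun y => Cq β φ (k + 1) y * 1) = fun y => Cq β φ (k + 1) y from
        funext fun y => mul_one _, int_Cq_one hint (k + 1) (by omega), mul_zero]
    rw [tsum_congr this, tsum_zero, intervalIntegral.integral_const]
    simp; ring
  -- integrals of f against cos and sin
  have intfcos : ∀ j : ℕ, 1 ≤ j → ∫ y in (0:ℝ)..(2 * π), f y * Real.cos ((j:ℝ) * y) =
      ψ j * (Pc φ j * Real.cos (β * π / 2) - Qc φ j * Real.sin (β * π / 2)) := by
    intro j hj
    have hcw : ∀ y : ℝ, |Real.cos ((j:ℝ) * y)| ≤ 1 := fun y => Real.abs_cos_le_one _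
    have hwc : Continuous fun y : ℝ => Real.cos ((j:ℝ) * y) :=
      Real.continuous_cos.comp (continuous_const.mul continuous_id)
    have heq : ∀ y, f y * Real.cos ((j:ℝ) * y) = a₀ / 2 * Real.cos ((j:ℝ) * y) +
        (1 / π) * ((∑' k, ψ (k + 1) * Cq β φ (k + 1) y) * Real.cos ((j:ℝ) * y)) := by
      intro y; rw [hrep y]; ring
    rw [intervalIntegral.integral_congr (fun y _ => heq y)]
    rw [intervalIntegral.integral_add (f := fun y => a₀ / 2 * Real.cos ((j:ℝ) * y))
      (g := fun y => (1 / π) * ((∑' k, ψ (k + 1) * Cq β φ (k + 1) y) * Real.cos ((j:ℝ) * y)))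
      ((continuous_const.mul hwc).intervalIntegrable _ _)
      ((continuous_const.mul (hgc.mul hwc)).intervalIntegrable _ _)]
    rw [intervalIntegral.integral_const_mul, intervalIntegral.integral_const_mul,
      gswap _ hwc hcw]
    have hval : ∀ k : ℕ, ψ (k + 1) * ∫ y in (0:ℝ)..(2 * π),
        Cq β φ (k + 1) y * Real.cos ((j:ℝ) * y) =
        if k = j - 1 then ψ j * (π * (Pc φ j * Real.cos (β * π / 2) -
          Qc φ j * Real.sin (β * π / 2))) else 0 := by
      intro k
      rw [int_Cq_cos hint (k + 1) j (by omega) hj]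
      rcases eq_or_ne k (j - 1) with h | h
      · have : k + 1 = j := by omega
        rw [this]; simp [h]
      · have : k + 1 ≠ j := by omega
        simp [h, this]
    rw [tsum_congr hval, tsum_eq_single (j - 1) (fun k hk => by simp [hk]), if_pos rfl]
    have : ∫ y in (0:ℝ)..(2 * π), Real.cos ((j:ℝ) * y) = 0 := by
      have := int_cos_phase j hj 0
      simpa using this
    rw [this]
    field_simp; ring
  have intfsin : ∀ j : ℕ, 1 ≤ j → ∫ y in (0:ℝ)..(2 * π), f y * Real.sin ((j:ℝ) * y) =
      ψ j * (Pc φ j * Real.sin (β * π / 2) + Qc φ j * Real.cos (β * π / 2)) := by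
    intro j hj
    have hcw : ∀ y : ℝ, |Real.sin ((j:ℝ) * y)| ≤ 1 := fun y => Real.abs_sin_le_one _
    have hwc : Continuous fun y : ℝ => Real.sin ((j:ℝ) * y) :=
      Real.continuous_sin.comp (continuous_const.mul continuous_id)
    have heq : ∀ y, f y * Real.sin ((j:ℝ) * y) = a₀ / 2 * Real.sin ((j:ℝ) * y) +
        (1 / π) * ((∑' k, ψ (k + 1) * Cq β φ (k + 1) y) * Real.sin ((j:ℝ) * y)) := by
      intro y; rw [hrep y]; ring
    rw [intervalIntegral.integral_congr (fun y _ => heq y)]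
    rw [intervalIntegral.integral_add (f := fun y => a₀ / 2 * Real.sin ((j:ℝ) * y))
      (g := fun y => (1 / π) * ((∑' k, ψ (k + 1) * Cq β φ (k + 1) y) * Real.sin ((j:ℝ) * y)))
      ((continuous_const.mul hwc).intervalIntegrable _ _)
      ((continuous_const.mul (hgc.mul hwc)).intervalIntegrable _ _)]
    rw [intervalIntegral.integral_const_mul, intervalIntegral.integral_const_mul,
      gswap _ hwc hcw]
    have hval : ∀ k : ℕ, ψ (k + 1) * ∫ y in (0:ℝ)..(2 * π),
        Cq β φ (k + 1) y * Real.sin ((j:ℝ) * y) =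
        if k = j - 1 then ψ j * (π * (Pc φ j * Real.sin (β * π / 2) +
          Qc φ j * Real.cos (β * π / 2))) else 0 := by
      intro k
      rw [int_Cq_sin hint (k + 1) j (by omega) hj]
      rcases eq_or_ne k (j - 1) with h | h
      · have : k + 1 = j := by omega
        rw [this]; simp [h]
      · have : k + 1 ≠ j := by omega
        simp [h, this]
    rw [tsum_congr hval, tsum_eq_single (j - 1) (fun k hk => by simp [hk]), if_pos rfl]
    have : ∫ y in (0:ℝ)..(2 * π), Real.sin ((j:ℝ) * y) = 0 := by
      have hj0 : (j : ℝ) ≠ 0 := by exact_mod_cast Nat.one_le_iff_ne_zero.1 hj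
      rw [integral_sin_zsmul _ hj0]
      have : Real.cos ((j:ℝ) * (2 * π)) = 1 := by
        have := cos_two_pi_int (j : ℤ); push_cast at this ⊢; exact this
      rw [mul_zero, Real.cos_zero, this]; ring
    rw [this]
    field_simp; ring
  -- assemble the Fourier sum
  have hfour : fourierSumR (n - 1) f x =
      a₀ / 2 + ∑ k ∈ Finset.Icc 1 (n - 1), (1 / π) * (ψ k * Cq β φ k x) := by
    unfold fourierSumR
    rw [intf]
    congr 1
    · field_simp
    · refine Finset.sum_congr rfl (fun k hk => ?_)
      have hk1 : 1 ≤ k := (Finset.mem_Icc.1 hk).1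
      rw [intfcos k hk1, intfsin k hk1, Cq_eq hint, Real.cos_sub, Real.sin_sub]
      ring
  -- the tail identity
  have tail := Summable.sum_add_tsum_nat_add (f := fun k => ψ (k + 1) * Cq β φ (k + 1) x)
    (n - 1) (hsummx x)
  have hidx : ∀ i : ℕ, i + (n - 1) + 1 = i + n := fun i => by omega
  simp only [hidx] at tail
  have hIcc : ∑ k ∈ Finset.Icc 1 (n - 1), ψ k * Cq β φ k x =
      ∑ i ∈ Finset.range (n - 1), ψ (i + 1) * Cq β φ (i + 1) x := by
    rw [← Finset.Ico_add_one_right_eq_Icc, Finset.sum_Ico_eq_sum_range]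
    refine Finset.sum_congr (by congr 1 <;> omega) (fun i _ => by rw [Nat.add_comm 1 i])
  rw [hfour, hrep x]
  have hBsum : ∑ k ∈ Finset.Icc 1 (n - 1), (1 / π) * (ψ k * Cq β φ k x) =
      (1 / π) * ∑ k ∈ Finset.Icc 1 (n - 1), ψ k * Cq β φ k x := by
    rw [Finset.mul_sum]
  rw [hBsum, hIcc]
  have : (∑' k, ψ (k + 1) * Cq β φ (k + 1) x) =
      (∑ i ∈ Finset.range (n - 1), ψ (i + 1) * Cq β φ (i + 1) x) +
      ∑' k, ψ (k + n) * Cq β φ (k + n) x := tail.symm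
  rw [this]
  ring

end Main
section Upper

variable {ψ : ℕ → ℝ} {β : ℝ} {φ f : ℝ → ℝ}

lemma psi_shiftn_summable (hψ' : Summable fun k => ψ (k + 1)) (n : ℕ) (hn : 1 ≤ n) :
    Summable (fun k => ψ (k + n)) := by
  have h := (summable_nat_add_iff (f := fun k => ψ (k + 1)) (n - 1)).2 hψ'
  have : (fun k => ψ (k + (n - 1) + 1)) = fun k => ψ (k + n) := by
    funext k; congr 1; omega
  rwa [this] at h

lemma abs_phi_transfer (hφp : ∀ x, φ (x + 2 * π) = φ x) :
    (∫ t in (-π)..π, |φ t|) = ∫ t in (0:ℝ)..(2 * π), |φ t| := by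
  have hper : Function.Periodic (fun t => |φ t|) (2 * π) := fun t => by simp [hφp t]
  have := hper.intervalIntegral_add_eq (-π) 0
  simpa [show -π + 2 * π = π by ring] using this

/-- pointwise bound on the deviation -/
lemma abs_dev_le (hψ0 : ∀ k, 0 ≤ ψ k) (hψ' : Summable fun k => ψ (k + 1))
    (hcl : InClassL1 ψ β f φ) (n : ℕ) (hn : 1 ≤ n)
    (hφ1 : (∫ t in (0:ℝ)..(2 * π), |φ t|) ≤ 1) (x : ℝ) :
    |f x - fourierSumR (n - 1) f x| ≤ (1 / π) * ∑' k, ψ (k + n) := by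
  have hπ : (0 : ℝ) < π := Real.pi_pos
  have hab : -π ≤ π := by linarith
  obtain ⟨-, -, hφp, hint, -, -⟩ := id hcl
  have hM1 : (∫ t in (-π)..π, |φ t|) ≤ 1 := by rw [abs_phi_transfer hφp]; exact hφ1
  have hψn := psi_shiftn_summable hψ' n hn
  rw [f_sub_fourier hψ0 hψ' hcl n hn x, abs_mul, abs_of_nonneg (by positivity : (0:ℝ) ≤ 1/π)]
  refine mul_le_mul_of_nonneg_left ?_ (by positivity)
  have hterm : ∀ k : ℕ, |ψ (k + n) * Cq β φ (k + n) x| ≤ ψ (k + n) := by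
    intro k
    rw [abs_mul, abs_of_nonneg (hψ0 _)]
    calc ψ (k + n) * |Cq β φ (k + n) x| ≤ ψ (k + n) * 1 :=
          mul_le_mul_of_nonneg_left ((Cq_abs_le hint _ x).trans hM1) (hψ0 _)
      _ = ψ (k + n) := mul_one _
  have hsummable : Summable (fun k => ψ (k + n) * Cq β φ (k + n) x) :=
    Summable.of_norm_bounded hψn (fun k => by rw [Real.norm_eq_abs]; exact hterm k)
  calc |∑' k, ψ (k + n) * Cq β φ (k + n) x| ≤ ∑' k, |ψ (k + n) * Cq β φ (k + n) x| := by
        simpa only [Real.norm_eq_abs] using norm_tsum_le_tsum_norm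
          (f := fun k => ψ (k + n) * Cq β φ (k + n) x)
          (by simpa only [Real.norm_eq_abs] using
            (hsummable.abs : Summable fun k => |ψ (k + n) * Cq β φ (k + n) x|))
    _ ≤ ∑' k, ψ (k + n) := Summable.tsum_le_tsum hterm hsummable.abs hψn

lemma dev_le_bound (hψ0 : ∀ k, 0 ≤ ψ k) (hψ' : Summable fun k => ψ (k + 1))
    (hcl : InClassL1 ψ β f φ) (n : ℕ) (hn : 1 ≤ n)
    (hφ1 : (∫ t in (0:ℝ)..(2 * π), |φ t|) ≤ 1) :
    dev n f ≤ (1 / π) * ∑' k, ψ (k + n) := by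
  exact ciSup_le (abs_dev_le hψ0 hψ' hcl n hn hφ1)

lemma EnClass_le_bound (hψ0 : ∀ k, 0 ≤ ψ k) (hψ' : Summable fun k => ψ (k + 1))
    (n : ℕ) (hn : 1 ≤ n) :
    EnClass ψ β n ≤ (1 / π) * ∑' k, ψ (k + n) := by
  have hψn := psi_shiftn_summable hψ' n hn
  refine Real.sSup_le (fun v hv => ?_)
    (mul_nonneg (by positivity) (tsum_nonneg fun k => hψ0 _))
  obtain ⟨f, φ, hcl, hφ1, rfl⟩ := hv
  exact dev_le_bound hψ0 hψ' hcl n hn hφ1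

end Upper
section Bump

/-- the bump set: `t ≡ [c, c+δ] (mod 2π)` described via `cos/sin` (hence periodic). -/
def bumpSet (δ c : ℝ) : Set ℝ :=
  {t | Real.cos δ ≤ Real.cos (t - c) ∧ 0 ≤ Real.sin (t - c)}

def bump (δ c : ℝ) : ℝ → ℝ := (bumpSet δ c).indicator (fun _ => (1 : ℝ))

lemma bumpSet_measurable (δ c : ℝ) : MeasurableSet (bumpSet δ c) := by
  apply MeasurableSet.inter
  · exact measurableSet_le measurable_const
      (Real.measurable_cos.comp (measurable_id.sub measurable_const))
  · exact measurableSet_le measurable_const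
      (Real.measurable_sin.comp (measurable_id.sub measurable_const))

lemma bump_nonneg (δ c t : ℝ) : 0 ≤ bump δ c t := by
  unfold bump; exact Set.indicator_nonneg (fun _ _ => zero_le_one) t

lemma bump_le_one (δ c t : ℝ) : bump δ c t ≤ 1 := by
  unfold bump Set.indicator; split <;> norm_num

lemma bump_periodic (δ c t : ℝ) : bump δ c (t + 2 * π) = bump δ c t := by
  unfold bump Set.indicator bumpSet
  have h : t + 2 * π - c = (t - c) + 2 * π := by ring
  simp only [Set.mem_setOf_eq, h, Real.cos_add_two_pi, Real.sin_add_two_pi]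

lemma bump_shift (δ c t : ℝ) : bump δ (c + 2 * π) t = bump δ c t := by
  unfold bump Set.indicator bumpSet
  have h : t - (c + 2 * π) = (t - c) - 2 * π := by ring
  simp only [Set.mem_setOf_eq, h, Real.cos_sub_two_pi, Real.sin_sub_two_pi]

lemma bump_intervalIntegrable (δ c a b : ℝ) :
    IntervalIntegrable (bump δ c) MeasureTheory.volume a b := by
  have hm : Measurable (bump δ c) :=
    (measurable_const.indicator (bumpSet_measurable δ c))
  constructor <;>
    exact (MeasureTheory.Integrable.mono' ((MeasureTheory.integrableOn_const_iff (by simp)).2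
        (Or.inr measure_Ioc_lt_top))
      hm.aestronglyMeasurable
      (Filter.Eventually.of_forall (fun t => by
        rw [Real.norm_eq_abs, abs_of_nonneg (bump_nonneg δ c t)]
        exact bump_le_one δ c t)))

/-- characterisation of the bump set inside one period window -/
lemma bump_char {δ c a : ℝ} (hδ0 : 0 < δ) (hδ : δ < π / 2) (hac : a < c)
    (hca : c + δ ≤ a + 2 * π) {t : ℝ} (ht : t ∈ Set.Ioc a (a + 2 * π)) :
    t ∈ bumpSet δ c ↔ t ∈ Set.Icc c (c + δ) := by
  have hπ : (0 : ℝ) < π := Real.pi_pos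
  have hcosδ : 0 < Real.cos δ := Real.cos_pos_of_mem_Ioo ⟨by linarith, hδ⟩
  set s := t - c with hs
  have hs1 : δ - 2 * π < s := by
    have : a - c ≥ δ - 2 * π := by linarith
    have : a < t := ht.1
    simp only [hs]; linarith
  have hs2 : s ≤ a - c + 2 * π := by
    have := ht.2; simp only [hs]; linarith
  have hs2' : s < 2 * π := by linarith
  constructor
  · rintro ⟨h1, h2⟩
    rw [← hs] at h1 h2
    -- show 0 ≤ s ∧ s ≤ δ
    have hkey : 0 ≤ s ∧ s ≤ δ := by
      rcases le_or_gt s (-π) with hcase | hcase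
      · -- s ∈ (δ - 2π, -π] : then s + 2π ∈ (δ, π]
        exfalso
        have hA : δ < s + 2 * π := by linarith
        have hB : s + 2 * π ≤ π := by linarith
        have : Real.cos (s + 2 * π) < Real.cos δ :=
          Real.cos_lt_cos_of_nonneg_of_le_pi (le_of_lt hδ0) hB hA
        rw [Real.cos_add_two_pi] at this
        linarith
      rcases lt_or_ge s 0 with hcase2 | hcase2
      · -- s ∈ (-π, 0): sin s < 0
        exfalso
        have := Real.sin_neg_of_neg_of_neg_pi_lt hcase2 hcase
        linarith
      rcases le_or_gt s π with hcase3 | hcase3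
      · -- s ∈ [0, π]
        refine ⟨hcase2, ?_⟩
        by_contra hgt
        push_neg at hgt
        have : Real.cos s < Real.cos δ :=
          Real.cos_lt_cos_of_nonneg_of_le_pi (le_of_lt hδ0) hcase3 hgt
        linarith
      · -- s ∈ (π, 2π): sin s < 0
        exfalso
        have h4 : s - 2 * π < 0 := by linarith
        have h5 : -π < s - 2 * π := by linarith
        have := Real.sin_neg_of_neg_of_neg_pi_lt h4 h5
        rw [Real.sin_sub_two_pi] at this
        linarith
    exact ⟨by simp only [hs] at hkey; linarith [hkey.1], by
      simp only [hs] at hkey; linarith [hkey.2]⟩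
  · rintro ⟨h1, h2⟩
    have hs0 : 0 ≤ s := by simp only [hs]; linarith
    have hsδ : s ≤ δ := by simp only [hs]; linarith
    constructor
    · rw [← hs]
      exact Real.cos_le_cos_of_nonneg_of_le_pi hs0 (by linarith) hsδ
    · rw [← hs]
      exact Real.sin_nonneg_of_nonneg_of_le_pi hs0 (by linarith)

/-- integral of `g * bump` over a period window -/
lemma bump_mul_integral {δ c a : ℝ} (hδ0 : 0 < δ) (hδ : δ < π / 2) (hac : a < c)
    (hca : c + δ ≤ a + 2 * π) (g : ℝ → ℝ) :
    ∫ t in a..(a + 2 * π), g t * bump δ c t = ∫ t in c..(c + δ), g t := by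
  have hπ : (0 : ℝ) < π := Real.pi_pos
  have h1 : a ≤ a + 2 * π := by linarith
  have h2 : c ≤ c + δ := by linarith
  have hsub : Set.Icc c (c + δ) ⊆ Set.Ioc a (a + 2 * π) := by
    intro t ht'
    exact ⟨lt_of_lt_of_le hac ht'.1, le_trans ht'.2 (by linarith)⟩
  rw [intervalIntegral.integral_of_le h1, intervalIntegral.integral_of_le h2]
  have heqon : Set.EqOn (fun t => g t * bump δ c t)
      ((Set.Icc c (c + δ)).indicator g) (Set.Ioc a (a + 2 * π)) := by
    intro t ht
    have hchar := bump_char hδ0 hδ hac hca ht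
    by_cases hmem : t ∈ bumpSet δ c
    · have hIcc : t ∈ Set.Icc c (c + δ) := hchar.1 hmem
      simp only [bump, Set.indicator_of_mem hmem, Set.indicator_of_mem hIcc, mul_one]
    · have hIcc : t ∉ Set.Icc c (c + δ) := fun h => hmem (hchar.2 h)
      simp only [bump, Set.indicator_of_notMem hmem, Set.indicator_of_notMem hIcc, mul_zero]
  rw [MeasureTheory.setIntegral_congr_fun measurableSet_Ioc heqon,
    MeasureTheory.setIntegral_indicator measurableSet_Icc,
    Set.inter_eq_self_of_subset_right hsub,
    MeasureTheory.integral_Icc_eq_integral_Ioc]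

end Bump
section Construction

lemma int_cos_lin {c : ℝ} (hc : c ≠ 0) (γ p q : ℝ) :
    ∫ t in p..q, Real.cos (c * t + γ) =
      (Real.sin (c * q + γ) - Real.sin (c * p + γ)) / c := by
  have key : ∀ t : ℝ, Real.cos (c * t + γ) =
      Real.cos γ * Real.cos (c * t) - Real.sin γ * Real.sin (c * t) := by
    intro t; rw [Real.cos_add]; ring
  simp only [key]
  rw [intervalIntegral.integral_sub, intervalIntegral.integral_const_mul,
    intervalIntegral.integral_const_mul, integral_cos_zsmul _ hc, integral_sin_zsmul _ hc,
    Real.sin_add, Real.sin_add]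
  · field_simp; ring
  · exact ((Real.continuous_cos.comp (continuous_const.mul continuous_id)).intervalIntegrable
      _ _).const_mul _
  · exact ((Real.continuous_sin.comp (continuous_const.mul continuous_id)).intervalIntegrable
      _ _).const_mul _

variable {ψ : ℕ → ℝ} {β : ℝ}

lemma PsiKer_periodic (ψ : ℕ → ℝ) (β : ℝ) (s : ℝ) :
    PsiKer ψ β (s + 2 * π) = PsiKer ψ β s := by
  unfold PsiKer
  refine tsum_congr (fun k => ?_)
  congr 1
  have h := Real.cos_add_nat_mul_two_pi (((k : ℝ) + 1) * s - β * π / 2) (k + 1)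
  push_cast at h
  rw [show ((k : ℝ) + 1) * (s + 2 * π) - β * π / 2 =
    ((k : ℝ) + 1) * s - β * π / 2 + ((k : ℝ) + 1) * (2 * π) by ring]
  rw [h]

/-- the near-extremal element -/
def phiD (n : ℕ) (δ : ℝ) : ℝ → ℝ := fun t =>
  (1 / (2 * δ)) * (bump δ (-(π / (2 * (n : ℝ)))) t - bump δ (π / (2 * (n : ℝ))) t)

def fD (ψ : ℕ → ℝ) (β : ℝ) (n : ℕ) (δ : ℝ) : ℝ → ℝ := fun x =>
  (1 / π) * ∫ t in (-π)..π, PsiKer ψ β (x - t) * phiD n δ t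

section Phi

variable {n : ℕ} {δ : ℝ} (hn : 1 ≤ n) (hδ0 : 0 < δ) (hδn : δ < π / (2 * (n : ℝ)))

lemma nreal_pos (hn : 1 ≤ n) : (0 : ℝ) < (n : ℝ) := by exact_mod_cast hn

lemma hδπ2 (hn : 1 ≤ n) (hδn : δ < π / (2 * (n : ℝ))) : δ < π / 2 := by
  have hπ : (0 : ℝ) < π := Real.pi_pos
  have h1 : (1 : ℝ) ≤ (n : ℝ) := by exact_mod_cast hn
  have : π / (2 * (n : ℝ)) ≤ π / 2 := by
    apply div_le_div_of_nonneg_left (le_of_lt hπ) (by norm_num) (by linarith)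
  linarith

lemma phiD_periodic (n : ℕ) (δ : ℝ) (t : ℝ) : phiD n δ (t + 2 * π) = phiD n δ t := by
  unfold phiD; rw [bump_periodic, bump_periodic]

lemma phiD_intervalIntegrable (n : ℕ) (δ : ℝ) (a b : ℝ) :
    IntervalIntegrable (phiD n δ) MeasureTheory.volume a b := by
  unfold phiD
  exact ((bump_intervalIntegrable _ _ a b).sub (bump_intervalIntegrable _ _ a b)).const_mul _

/-- window integrals of the two bumps over `(-π, π)` -/
lemma bumpu_winA (g : ℝ → ℝ) (hn : 1 ≤ n) (hδ0 : 0 < δ) (hδn : δ < π / (2 * (n : ℝ))) :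
    ∫ t in (-π)..π, g t * bump δ (-(π / (2 * (n : ℝ)))) t =
      ∫ t in (-(π / (2 * (n : ℝ))))..(-(π / (2 * (n : ℝ))) + δ), g t := by
  have hπ : (0 : ℝ) < π := Real.pi_pos
  have hnr := nreal_pos hn
  have h1 : (1 : ℝ) ≤ (n : ℝ) := by exact_mod_cast hn
  have hv : π / (2 * (n : ℝ)) ≤ π / 2 :=
    div_le_div_of_nonneg_left (le_of_lt hπ) (by norm_num) (by linarith)
  have hv0 : 0 < π / (2 * (n : ℝ)) := by positivity
  have := bump_mul_integral (δ := δ) (c := -(π / (2 * (n : ℝ)))) (a := -π)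
    hδ0 (hδπ2 hn hδn) (by linarith) (by linarith) g
  rwa [show -π + 2 * π = π by ring] at this

lemma bumpv_winA (g : ℝ → ℝ) (hn : 1 ≤ n) (hδ0 : 0 < δ) (hδn : δ < π / (2 * (n : ℝ))) :
    ∫ t in (-π)..π, g t * bump δ (π / (2 * (n : ℝ))) t =
      ∫ t in (π / (2 * (n : ℝ)))..(π / (2 * (n : ℝ)) + δ), g t := by
  have hπ : (0 : ℝ) < π := Real.pi_pos
  have hnr := nreal_pos hn
  have h1 : (1 : ℝ) ≤ (n : ℝ) := by exact_mod_cast hn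
  have hv : π / (2 * (n : ℝ)) ≤ π / 2 :=
    div_le_div_of_nonneg_left (le_of_lt hπ) (by norm_num) (by linarith)
  have hv0 : 0 < π / (2 * (n : ℝ)) := by positivity
  have := bump_mul_integral (δ := δ) (c := π / (2 * (n : ℝ))) (a := -π)
    hδ0 (hδπ2 hn hδn) (by linarith) (by linarith) g
  rwa [show -π + 2 * π = π by ring] at this

lemma int_phiD_zero (hn : 1 ≤ n) (hδ0 : 0 < δ) (hδn : δ < π / (2 * (n : ℝ))) :
    ∫ t in (-π)..π, phiD n δ t = 0 := by
  unfold phiD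
  rw [intervalIntegral.integral_const_mul,
    intervalIntegral.integral_sub (bump_intervalIntegrable _ _ _ _)
      (bump_intervalIntegrable _ _ _ _)]
  have h1 := bumpu_winA (fun _ => (1:ℝ)) hn hδ0 hδn
  have h2 := bumpv_winA (fun _ => (1:ℝ)) hn hδ0 hδn
  simp only [one_mul] at h1 h2
  rw [h1, h2]
  simp

lemma int_abs_phiD_one (hn : 1 ≤ n) (hδ0 : 0 < δ) (hδn : δ < π / (2 * (n : ℝ))) :
    ∫ t in (0:ℝ)..(2 * π), |phiD n δ t| = 1 := by
  have hπ : (0 : ℝ) < π := Real.pi_pos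
  have hnr := nreal_pos hn
  have h1 : (1 : ℝ) ≤ (n : ℝ) := by exact_mod_cast hn
  have hv : π / (2 * (n : ℝ)) ≤ π / 2 :=
    div_le_div_of_nonneg_left (le_of_lt hπ) (by norm_num) (by linarith)
  have hv0 : 0 < π / (2 * (n : ℝ)) := by positivity
  set u : ℝ := -(π / (2 * (n : ℝ))) with hu
  set v : ℝ := π / (2 * (n : ℝ)) with hv'
  have hδ2 := hδπ2 hn hδn
  -- pointwise on the window
  have hpt : ∀ t ∈ Set.Ioc (0:ℝ) (0 + 2 * π),
      |phiD n δ t| = (1 / (2 * δ)) * (bump δ u t + bump δ v t) := by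
    intro t ht
    have hcharu : t ∈ bumpSet δ u ↔ t ∈ Set.Icc (u + 2 * π) ((u + 2 * π) + δ) := by
      have hsetshift : t ∈ bumpSet δ u ↔ t ∈ bumpSet δ (u + 2 * π) := by
        unfold bumpSet
        have h : t - (u + 2 * π) = (t - u) - 2 * π := by ring
        simp only [Set.mem_setOf_eq, h, Real.cos_sub_two_pi, Real.sin_sub_two_pi]
      rw [hsetshift]
      exact bump_char hδ0 hδ2 (by rw [hu]; linarith) (by rw [hu]; linarith) ht
    have hcharv : t ∈ bumpSet δ v ↔ t ∈ Set.Icc v (v + δ) :=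
      bump_char hδ0 hδ2 (by rw [hv']; linarith) (by rw [hv']; linarith) ht
    have hdisj : ¬ (t ∈ bumpSet δ u ∧ t ∈ bumpSet δ v) := by
      rintro ⟨h1', h2'⟩
      have hA := hcharu.1 h1'
      have hB := hcharv.1 h2'
      have : u + 2 * π ≤ t := hA.1
      have : t ≤ v + δ := hB.2
      have hvu : v + δ < u + 2 * π := by
        rw [hu, hv']
        have : π / (2 * (n : ℝ)) + δ < π := by linarith
        linarith
      linarith [hA.1, hB.2]
    unfold phiD bump Set.indicator
    rw [← hu, ← hv']
    by_cases h1' : t ∈ bumpSet δ u <;> by_cases h2' : t ∈ bumpSet δ v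
    · exact absurd ⟨h1', h2'⟩ hdisj
    · simp only [h1', h2', if_true, if_false]
      rw [abs_mul, abs_of_nonneg (by positivity : (0:ℝ) ≤ 1 / (2 * δ))]
      norm_num
    · simp only [h1', h2', if_true, if_false]
      rw [abs_mul, abs_of_nonneg (by positivity : (0:ℝ) ≤ 1 / (2 * δ))]
      norm_num
    · simp only [h1', h2', if_false]
      norm_num
  -- compute
  have h02π : (0:ℝ) ≤ 0 + 2 * π := by linarith
  rw [show (2 * π : ℝ) = 0 + 2 * π by ring, intervalIntegral.integral_of_le h02π,
    MeasureTheory.setIntegral_congr_fun measurableSet_Ioc hpt,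
    ← intervalIntegral.integral_of_le h02π]
  have hbu : ∫ t in (0:ℝ)..(0 + 2 * π), bump δ u t = δ := by
    have hsh : ∀ t, bump δ u t = bump δ (u + 2 * π) t := fun t => (bump_shift δ u t).symm
    simp only [hsh]
    have := bump_mul_integral (δ := δ) (c := u + 2 * π) (a := 0)
      hδ0 hδ2 (by rw [hu]; linarith) (by rw [hu]; linarith) (fun _ => (1:ℝ))
    simp only [one_mul] at this
    rw [this]
    simp
  have hbv : ∫ t in (0:ℝ)..(0 + 2 * π), bump δ v t = δ := by
    have := bump_mul_integral (δ := δ) (c := v) (a := 0)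
      hδ0 hδ2 (by rw [hv']; linarith) (by rw [hv']; linarith) (fun _ => (1:ℝ))
    simp only [one_mul] at this
    rw [this]
    simp
  rw [intervalIntegral.integral_const_mul,
    intervalIntegral.integral_add (bump_intervalIntegrable _ _ _ _)
      (bump_intervalIntegrable _ _ _ _), hbu, hbv]
  field_simp
  ring

lemma int_abs_phiD_winA (hn : 1 ≤ n) (hδ0 : 0 < δ) (hδn : δ < π / (2 * (n : ℝ))) :
    ∫ t in (-π)..π, |phiD n δ t| = 1 := by
  rw [abs_phi_transfer (fun x => phiD_periodic n δ x)]
  exact int_abs_phiD_one hn hδ0 hδn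

/-- the main value: `C_n(x₀) = sin(nδ)/(nδ)` at `x₀ = -(π/(2n)) + βπ/(2n)` -/
lemma Cq_value (hn : 1 ≤ n) (hδ0 : 0 < δ) (hδn : δ < π / (2 * (n : ℝ))) :
    Cq β (phiD n δ) n (-(π / (2 * (n : ℝ))) + β * π / (2 * (n : ℝ))) =
      Real.sin ((n : ℝ) * δ) / ((n : ℝ) * δ) := by
  have hπ : (0 : ℝ) < π := Real.pi_pos
  have hnr := nreal_pos hn
  have hnne : (n : ℝ) ≠ 0 := ne_of_gt hnr
  set u : ℝ := -(π / (2 * (n : ℝ))) with hu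
  set v : ℝ := π / (2 * (n : ℝ)) with hv'
  set x₀ : ℝ := u + β * π / (2 * (n : ℝ)) with hx₀
  have hkey : ∀ t : ℝ, Real.cos ((n : ℝ) * (x₀ - t) - β * π / 2) =
      Real.cos ((n : ℝ) * t + (-(n : ℝ) * u)) := by
    intro t
    have harg : (n : ℝ) * (x₀ - t) - β * π / 2 = -((n : ℝ) * t + (-(n : ℝ) * u)) := by
      rw [hx₀, hu]
      field_simp
      ring
    rw [harg, Real.cos_neg]
  unfold Cq phiD
  simp only [← hu, ← hv']
  have hsplit : ∀ t : ℝ, Real.cos ((n : ℝ) * (x₀ - t) - β * π / 2) *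
      ((1 / (2 * δ)) * (bump δ u t - bump δ v t)) =
      (1 / (2 * δ)) * (Real.cos ((n : ℝ) * t + (-(n : ℝ) * u)) * bump δ u t -
        Real.cos ((n : ℝ) * t + (-(n : ℝ) * u)) * bump δ v t) := by
    intro t; rw [hkey t]; ring
  have hgc : Continuous fun t : ℝ => Real.cos ((n : ℝ) * t + (-(n : ℝ) * u)) :=
    Real.continuous_cos.comp ((continuous_const.mul continuous_id).add continuous_const)
  rw [intervalIntegral.integral_congr (fun t _ => hsplit t)]
  rw [intervalIntegral.integral_const_mul,
    intervalIntegral.integral_sub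
      ((bump_intervalIntegrable _ _ _ _).continuousOn_mul hgc.continuousOn)
      ((bump_intervalIntegrable _ _ _ _).continuousOn_mul hgc.continuousOn)]
  rw [bumpu_winA _ hn hδ0 hδn, bumpv_winA _ hn hδ0 hδn]
  rw [← hu, ← hv']
  rw [int_cos_lin hnne, int_cos_lin hnne]
  have e1 : (n : ℝ) * (u + δ) + -(n : ℝ) * u = (n : ℝ) * δ := by ring
  have e2 : (n : ℝ) * u + -(n : ℝ) * u = 0 := by ring
  have e3 : (n : ℝ) * (v + δ) + -(n : ℝ) * u = π + (n : ℝ) * δ := by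
    rw [hu, hv']; field_simp; ring
  have e4 : (n : ℝ) * v + -(n : ℝ) * u = π := by
    rw [hu, hv']; field_simp; ring
  rw [e1, e2, e3, e4, Real.sin_zero, Real.sin_pi]
  rw [show π + (n : ℝ) * δ = (n : ℝ) * δ + π by ring, Real.sin_add_pi]
  field_simp
  ring

end Phi

end Construction
section Lower

variable {ψ : ℕ → ℝ} {β : ℝ} {n : ℕ} {δ : ℝ}

lemma fD_inclass (hψ0 : ∀ k, 0 ≤ ψ k) (hψ' : Summable fun k => ψ (k + 1))
    (hn : 1 ≤ n) (hδ0 : 0 < δ) (hδn : δ < π / (2 * (n : ℝ))) :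
    InClassL1 ψ β (fD ψ β n δ) (phiD n δ) := by
  have hint := phiD_intervalIntegrable n δ (-π) π
  have hMnn : (0:ℝ) ≤ ∫ t in (-π)..π, |phiD n δ t| :=
    intervalIntegral.integral_nonneg (by linarith [Real.pi_pos]) (fun t _ => abs_nonneg _)
  refine ⟨?_, ?_, phiD_periodic n δ, hint, int_phiD_zero hn hδ0 hδn, 0, ?_⟩
  · -- continuity
    have heq : fD ψ β n δ = fun x => (1 / π) * ∑' k, ψ (k + 1) * Cq β (phiD n δ) (k + 1) x :=
      funext fun x => by unfold fD; rw [kernel_rep hψ0 hψ' hint x]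
    rw [heq]
    refine continuous_const.mul (continuous_tsum
      (fun k => continuous_const.mul (Cq_cont hint (k + 1)))
      (hψ'.mul_right (∫ t in (-π)..π, |phiD n δ t|)) (fun k x => ?_))
    rw [Real.norm_eq_abs, abs_mul, abs_of_nonneg (hψ0 _)]
    exact mul_le_mul_of_nonneg_left (Cq_abs_le hint _ x) (hψ0 _)
  · -- periodicity
    intro x
    unfold fD
    congr 1
    refine intervalIntegral.integral_congr (fun t _ => ?_)
    rw [show x + 2 * π - t = (x - t) + 2 * π by ring, PsiKer_periodic]
  · intro x
    rw [zero_div, zero_add]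
    rfl

lemma EnClass_ge_value (hψ0 : ∀ k, 0 ≤ ψ k) (hψ' : Summable fun k => ψ (k + 1))
    (hn : 1 ≤ n) (hδ0 : 0 < δ) (hδn : δ < π / (2 * (n : ℝ))) :
    (1 / π) * (ψ n * (Real.sin ((n : ℝ) * δ) / ((n : ℝ) * δ)) - ∑' k, ψ (k + n + 1)) ≤
      EnClass ψ β n := by
  have hπ : (0 : ℝ) < π := Real.pi_pos
  have hint := phiD_intervalIntegrable n δ (-π) π
  have hcl : InClassL1 ψ β (fD ψ β n δ) (phiD n δ) := fD_inclass hψ0 hψ' hn hδ0 hδn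
  have habs1 : ∫ t in (0:ℝ)..(2 * π), |phiD n δ t| = 1 := int_abs_phiD_one hn hδ0 hδn
  have hφ1 : (∫ t in (0:ℝ)..(2 * π), |phiD n δ t|) ≤ 1 := le_of_eq habs1
  have hMφ1 : (∫ t in (-π)..π, |phiD n δ t|) = 1 := int_abs_phiD_winA hn hδ0 hδn
  have hψn := psi_shiftn_summable hψ' n hn
  have hψn1 := psi_shiftn_summable hψ' (n + 1) (by omega)
  -- the EnClass set is bounded above and contains dev n fD
  have hb1 : dev n (fD ψ β n δ) ≤ EnClass ψ β n := by
    apply le_csSup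
    · refine ⟨(1 / π) * ∑' k, ψ (k + n), ?_⟩
      rintro v ⟨f, φ, hcl', hφ1', rfl⟩
      exact dev_le_bound hψ0 hψ' hcl' n hn hφ1'
    · exact ⟨fD ψ β n δ, phiD n δ, hcl, hφ1, rfl⟩
  -- lower bound on the deviation at x₀
  set x₀ : ℝ := -(π / (2 * (n : ℝ))) + β * π / (2 * (n : ℝ)) with hx₀
  have hdev : |fD ψ β n δ x₀ - fourierSumR (n - 1) (fD ψ β n δ) x₀| ≤ dev n (fD ψ β n δ) := by
    apply le_ciSup (f := fun x => |fD ψ β n δ x - fourierSumR (n - 1) (fD ψ β n δ) x|)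
    refine ⟨(1 / π) * ∑' k, ψ (k + n), ?_⟩
    rintro y ⟨x, rfl⟩
    exact abs_dev_le hψ0 hψ' hcl n hn hφ1 x
  have hrep := f_sub_fourier hψ0 hψ' hcl n hn x₀
  have hsummable : Summable fun k => ψ (k + n) * Cq β (phiD n δ) (k + n) x₀ := by
    refine Summable.of_norm_bounded hψn (fun k => ?_)
    rw [Real.norm_eq_abs, abs_mul, abs_of_nonneg (hψ0 _)]
    calc ψ (k + n) * |Cq β (phiD n δ) (k + n) x₀| ≤ ψ (k + n) * 1 := by
          refine mul_le_mul_of_nonneg_left ?_ (hψ0 _)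
          rw [← hMφ1]; exact Cq_abs_le hint _ x₀
      _ = ψ (k + n) := mul_one _
  have hsplit : (∑' k, ψ (k + n) * Cq β (phiD n δ) (k + n) x₀) =
      ψ n * (Real.sin ((n : ℝ) * δ) / ((n : ℝ) * δ)) +
      ∑' k, ψ (k + 1 + n) * Cq β (phiD n δ) (k + 1 + n) x₀ := by
    rw [Summable.tsum_eq_zero_add hsummable]
    congr 1
    rw [Nat.zero_add, hx₀, Cq_value hn hδ0 hδn]
  have hRabs : |∑' k, ψ (k + 1 + n) * Cq β (phiD n δ) (k + 1 + n) x₀| ≤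
      ∑' k, ψ (k + n + 1) := by
    have hidx : ∀ k : ℕ, k + 1 + n = k + n + 1 := fun k => by omega
    simp only [hidx]
    have hterm : ∀ k : ℕ, |ψ (k + n + 1) * Cq β (phiD n δ) (k + n + 1) x₀| ≤ ψ (k + n + 1) := by
      intro k
      rw [abs_mul, abs_of_nonneg (hψ0 _)]
      calc ψ (k + n + 1) * |Cq β (phiD n δ) (k + n + 1) x₀| ≤ ψ (k + n + 1) * 1 := by
            refine mul_le_mul_of_nonneg_left ?_ (hψ0 _)
            rw [← hMφ1]; exact Cq_abs_le hint _ x₀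
        _ = _ := mul_one _
    have hsum2 : Summable fun k => ψ (k + n + 1) * Cq β (phiD n δ) (k + n + 1) x₀ := by
      refine Summable.of_norm_bounded hψn1 (fun k => ?_)
      rw [Real.norm_eq_abs]; exact hterm k
    calc |∑' k, ψ (k + n + 1) * Cq β (phiD n δ) (k + n + 1) x₀| ≤
        ∑' k, |ψ (k + n + 1) * Cq β (phiD n δ) (k + n + 1) x₀| := by
          simpa only [Real.norm_eq_abs] using norm_tsum_le_tsum_norm
            (f := fun k => ψ (k + n + 1) * Cq β (phiD n δ) (k + n + 1) x₀)
            (by simpa only [Real.norm_eq_abs] using hsum2.abs)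
      _ ≤ ∑' k, ψ (k + n + 1) := Summable.tsum_le_tsum hterm hsum2.abs hψn1
  have hval : (1 / π) * (ψ n * (Real.sin ((n : ℝ) * δ) / ((n : ℝ) * δ)) -
      ∑' k, ψ (k + n + 1)) ≤ fD ψ β n δ x₀ - fourierSumR (n - 1) (fD ψ β n δ) x₀ := by
    rw [hrep, hsplit]
    refine mul_le_mul_of_nonneg_left ?_ (by positivity)
    have := neg_abs_le (∑' k, ψ (k + 1 + n) * Cq β (phiD n δ) (k + 1 + n) x₀)
    linarith [hRabs]
  calc (1 / π) * (ψ n * (Real.sin ((n : ℝ) * δ) / ((n : ℝ) * δ)) - ∑' k, ψ (k + n + 1))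
      ≤ fD ψ β n δ x₀ - fourierSumR (n - 1) (fD ψ β n δ) x₀ := hval
    _ ≤ |fD ψ β n δ x₀ - fourierSumR (n - 1) (fD ψ β n δ) x₀| := le_abs_self _
    _ ≤ dev n (fD ψ β n δ) := hdev
    _ ≤ EnClass ψ β n := hb1

lemma EnClass_ge_limit (hψ0 : ∀ k, 0 ≤ ψ k) (hψ' : Summable fun k => ψ (k + 1))
    (hn : 1 ≤ n) :
    (1 / π) * (ψ n - ∑' k, ψ (k + n + 1)) ≤ EnClass ψ β n := by
  have hπ : (0 : ℝ) < π := Real.pi_pos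
  have hnr : (0 : ℝ) < (n : ℝ) := by exact_mod_cast hn
  refine le_of_forall_pos_le_add (fun ε hε => ?_)
  set δ : ℝ := min (π / (4 * (n : ℝ))) (min (1 / (2 * (n : ℝ))) (ε / (ψ n * (n : ℝ) + 1)))
    with hδdef
  have hψn0 : 0 ≤ ψ n := hψ0 n
  have hδ0 : 0 < δ := by
    apply lt_min (by positivity)
    apply lt_min (by positivity)
    positivity
  have hδn : δ < π / (2 * (n : ℝ)) := by
    have h1 : δ ≤ π / (4 * (n : ℝ)) := min_le_left _ _
    have h2 : π / (4 * (n : ℝ)) < π / (2 * (n : ℝ)) := by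
      apply div_lt_div_of_pos_left hπ (by positivity)
      linarith
    linarith
  have hnδ : (n : ℝ) * δ ≤ 1 / 2 := by
    have h1 : δ ≤ 1 / (2 * (n : ℝ)) := le_trans (min_le_right _ _) (min_le_left _ _)
    calc (n : ℝ) * δ ≤ (n : ℝ) * (1 / (2 * (n : ℝ))) :=
          mul_le_mul_of_nonneg_left h1 (le_of_lt hnr)
      _ = 1 / 2 := by field_simp
  have hnδ0 : 0 < (n : ℝ) * δ := by positivity
  have hsin : 1 - ((n : ℝ) * δ) ^ 2 / 4 ≤ Real.sin ((n : ℝ) * δ) / ((n : ℝ) * δ) := by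
    have h := Real.sin_gt_sub_cube hnδ0
    rw [le_div_iff₀ hnδ0]
    nlinarith [h]
  have hkey := EnClass_ge_value (β := β) hψ0 hψ' hn hδ0 hδn
  have herr : (1 / π) * (ψ n * (1 - ((n : ℝ) * δ) ^ 2 / 4)) ≥ (1 / π) * ψ n - ε := by
    have h2 : (1 / π) * (ψ n * (((n : ℝ) * δ) ^ 2 / 4)) ≤ ε := by
      have hsq : ((n : ℝ) * δ) ^ 2 ≤ (n : ℝ) * δ := by nlinarith
      have hδe : δ ≤ ε / (ψ n * (n : ℝ) + 1) :=
        le_trans (min_le_right _ _) (min_le_right _ _)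
      have h3 : ψ n * ((n : ℝ) * δ) ≤ ε := by
        rw [le_div_iff₀ (by positivity : (0:ℝ) < ψ n * (n : ℝ) + 1)] at hδe
        nlinarith
      have h4 : (1 / π) * (ψ n * (((n : ℝ) * δ) ^ 2 / 4)) ≤ ψ n * (((n : ℝ) * δ) ^ 2) := by
        have hple : (1:ℝ) / π ≤ 1 := by
          rw [div_le_one hπ]; linarith [Real.pi_gt_three]
        have hX : (0:ℝ) ≤ ψ n * (((n : ℝ) * δ) ^ 2 / 4) := by positivity
        have step1 : (1 / π) * (ψ n * (((n : ℝ) * δ) ^ 2 / 4)) ≤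
            ψ n * (((n : ℝ) * δ) ^ 2 / 4) := mul_le_of_le_one_left hX hple
        have step2 : ψ n * (((n : ℝ) * δ) ^ 2 / 4) ≤ ψ n * (((n : ℝ) * δ) ^ 2) :=
          mul_le_mul_of_nonneg_left (by nlinarith [sq_nonneg ((n:ℝ) * δ)]) (hψ0 n)
        linarith
      nlinarith [hψ0 n]
    have : (1 / π) * (ψ n * (1 - ((n : ℝ) * δ) ^ 2 / 4)) =
        (1 / π) * ψ n - (1 / π) * (ψ n * (((n : ℝ) * δ) ^ 2 / 4)) := by ring
    linarith
  have hmono : (1 / π) * (ψ n * (1 - ((n : ℝ) * δ) ^ 2 / 4) - ∑' k, ψ (k + n + 1)) ≤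
      (1 / π) * (ψ n * (Real.sin ((n : ℝ) * δ) / ((n : ℝ) * δ)) - ∑' k, ψ (k + n + 1)) := by
    refine mul_le_mul_of_nonneg_left ?_ (by positivity)
    have := mul_le_mul_of_nonneg_left hsin hψn0
    linarith
  have hfinal : (1 / π) * (ψ n - ∑' k, ψ (k + n + 1)) - ε ≤
      (1 / π) * (ψ n * (1 - ((n : ℝ) * δ) ^ 2 / 4) - ∑' k, ψ (k + n + 1)) := by
    have e1 : (1 / π) * (ψ n - ∑' k, ψ (k + n + 1)) =
        (1 / π) * ψ n - (1 / π) * ∑' k, ψ (k + n + 1) := by ring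
    have e2 : (1 / π) * (ψ n * (1 - ((n : ℝ) * δ) ^ 2 / 4) - ∑' k, ψ (k + n + 1)) =
        (1 / π) * (ψ n * (1 - ((n : ℝ) * δ) ^ 2 / 4)) - (1 / π) * ∑' k, ψ (k + n + 1) := by
      ring
    linarith
  linarith

end Lower

/-- `|𝓔_n(C^ψ_{β,1})_C - (1/π) ψ(n)| ≤ (2/n) Σ_{k=n+1}^∞ k ψ(k)`. -/
theorem EnClass_near_psi_n (ψ : ℕ → ℝ) (hψ : ∀ k, 0 ≤ ψ k)
    (hsum : Summable (fun k : ℕ => (k : ℝ) * ψ k)) (β : ℝ) (n : ℕ) (hn : 1 ≤ n) :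
    |EnClass ψ β n - (1 / π) * ψ n| ≤
      (2 / (n : ℝ)) * ∑' k : ℕ, ((k : ℝ) + (n : ℝ) + 1) * ψ (k + n + 1) := by
  have hπ : (0 : ℝ) < π := Real.pi_pos
  have hnr : (0 : ℝ) < (n : ℝ) := by exact_mod_cast hn
  have hψ' := psi_shift_summable hψ hsum
  have hψn := psi_shiftn_summable hψ' n hn
  have hψn1 := psi_shiftn_summable hψ' (n + 1) (by omega)
  set T : ℝ := ∑' k, ψ (k + n + 1) with hT
  set S : ℝ := ∑' k : ℕ, ((k : ℝ) + (n : ℝ) + 1) * ψ (k + n + 1) with hS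
  have hT0 : 0 ≤ T := tsum_nonneg (fun k => hψ _)
  -- the tail sum splits
  have htsplit : (∑' k, ψ (k + n)) = ψ n + T := by
    rw [Summable.tsum_eq_zero_add hψn]
    congr 1
    · rw [Nat.zero_add]
    · rw [hT]
      exact tsum_congr (fun k => by congr 1; omega)
  -- upper bound
  have hub : EnClass ψ β n ≤ (1 / π) * ψ n + (1 / π) * T := by
    have := EnClass_le_bound (β := β) hψ hψ' n hn
    rw [htsplit] at this
    linarith [this, (by ring : (1 / π) * (ψ n + T) = (1 / π) * ψ n + (1 / π) * T)]
  -- lower bound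
  have hlb : (1 / π) * ψ n - (1 / π) * T ≤ EnClass ψ β n := by
    have := EnClass_ge_limit (β := β) hψ hψ' hn
    rw [← hT] at this
    linarith [this, (by ring : (1 / π) * (ψ n - T) = (1 / π) * ψ n - (1 / π) * T)]
  -- summability of S
  have hSsum : Summable (fun k : ℕ => ((k : ℝ) + (n : ℝ) + 1) * ψ (k + n + 1)) := by
    have h := (summable_nat_add_iff (f := fun k : ℕ => (k : ℝ) * ψ k) (n + 1)).2 hsum
    have heq : (fun k : ℕ => ((k + (n + 1) : ℕ) : ℝ) * ψ (k + (n + 1))) =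
        fun k : ℕ => ((k : ℝ) + (n : ℝ) + 1) * ψ (k + n + 1) := by
      funext k
      have h1 : k + (n + 1) = k + n + 1 := by omega
      rw [h1]; push_cast; ring_nf
    rwa [heq] at h
  have hS0 : 0 ≤ S := tsum_nonneg (fun k => mul_nonneg (by positivity) (hψ _))
  -- n * T ≤ S
  have hnT : (n : ℝ) * T ≤ S := by
    rw [hT, ← tsum_mul_left]
    refine Summable.tsum_le_tsum (fun k => ?_) (hψn1.mul_left _) hSsum
    refine mul_le_mul_of_nonneg_right ?_ (hψ _)
    have : (0:ℝ) ≤ (k : ℝ) := Nat.cast_nonneg k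
    linarith
  -- conclude
  have hTS : (1 / π) * T ≤ (2 / (n : ℝ)) * S := by
    have h1 : (1 / π) * T ≤ T := by
      have hple : (1:ℝ) / π ≤ 1 := by
        rw [div_le_one hπ]; linarith [Real.pi_gt_three]
      nlinarith
    have h2 : T ≤ S / (n : ℝ) := by
      rw [le_div_iff₀ hnr]; linarith [hnT]
    have h3 : S / (n : ℝ) ≤ (2 / (n : ℝ)) * S := by
      rw [div_eq_mul_inv, div_eq_mul_inv]
      have : S * (n : ℝ)⁻¹ ≤ 2 * (S * (n : ℝ)⁻¹) := by
        have : 0 ≤ S * (n : ℝ)⁻¹ := by positivity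
        linarith
      linarith [this, (by ring : 2 * ((n:ℝ))⁻¹ * S = 2 * (S * ((n:ℝ))⁻¹))]
    linarith
  rw [abs_le]
  constructor
  · linarith
  · linarith
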